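/- Let C be a category with W satisfying CF1–CF3. Given a representative (C, u₁, u₂, φ, C', u₁', u₂') of a double cell in C{W} and another representative (v₁, D, v₂) of its codomain vertical arrow [u₁', C', u₂'], there exist r : E → C with w₁u₁r ∈ W and ψ : E → D such that (E, u₁r, u₂r, ψ, D, v₁, v₂) represents the same double cell. -/
import Mathlib


/-!
STATEMENT 15: Given a representative `(C, u₁, u₂, φ, C', u₁', u₂')` of a
double cell in `C{W}` and another representative `(v₁, D, v₂)` of its
codomain (right) vertical arrow, there are arrows `r : E → C` with
`w₁ ∘ u₁ ∘ r ∈ W` and `ψ : E → D` such that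
`(E, u₁ ∘ r, u₂ ∘ r, ψ, D, v₁, v₂)` is a representative diagram of the same
double cell.
-/

open CategoryTheory

universe v u

variable {C : Type u} [Category.{v} C]

/-- The Gabriel–Zisman (right) calculus of fractions conditions CF1–CF3. -/
structure FractionsCalculus (W : MorphismProperty C) : Prop where
  isos : ∀ {X Y : C} (f : X ⟶ Y), IsIso f → W f
  comp : ∀ {X Y Z : C} (f : X ⟶ Y) (g : Y ⟶ Z), W f → W g → W (f ≫ g)
  ore : ∀ {X A B : C} (f : X ⟶ B) (w : A ⟶ B), W w →
    ∃ (D : C) (fbar : D ⟶ A) (wbar : D ⟶ X), W wbar ∧ fbar ≫ w = wbar ≫ f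
  cancel : ∀ {A B X : C} (f g : A ⟶ B) (w : B ⟶ X), W w → f ≫ w = g ≫ w →
    ∃ (Y : C) (wt : Y ⟶ A), W wt ∧ wt ≫ f = wt ≫ g

/-- Two connecting spans `(p₁, p₂)` and `(q₁, q₂)` between `w₁ : A₁ ⟶ B` and
`w₂ : A₂ ⟶ B` represent the same vertical arrow of `C{W}`. -/
def SpanEquivRaw (W : MorphismProperty C) {A₁ A₂ B : C}
    (w₁ : A₁ ⟶ B) (w₂ : A₂ ⟶ B) {P Q : C}
    (p₁ : P ⟶ A₁) (p₂ : P ⟶ A₂) (q₁ : Q ⟶ A₁) (q₂ : Q ⟶ A₂) : Prop :=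
  ∃ (E : C) (r : E ⟶ P) (s : E ⟶ Q),
    r ≫ p₁ = s ≫ q₁ ∧ r ≫ p₂ = s ≫ q₂ ∧ W (r ≫ p₁ ≫ w₁)

/-- A representative diagram of a double cell of `C{W}` in the frame given by
objects `(w₁ : A₁ ⟶ B)`, `(w₂ : A₂ ⟶ B)`, `(w₁' : A₁' ⟶ B')`,
`(w₂' : A₂' ⟶ B')` (top-left, bottom-left, top-right and bottom-right),
top horizontal arrow `f₁ : (w₁) → (w₁')` and bottom horizontal arrow
`f₂ : (w₂) → (w₂')`; the left and right vertical boundaries are the classes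
of the connecting spans `(u₁, u₂)` and `(u₁', u₂')`. -/
structure CellDiag (W : MorphismProperty C) {A₁ A₂ B A₁' A₂' B' : C}
    (w₁ : A₁ ⟶ B) (w₂ : A₂ ⟶ B) (w₁' : A₁' ⟶ B') (w₂' : A₂' ⟶ B')
    (f₁ : A₁ ⟶ A₁') (f₂ : A₂ ⟶ A₂') where
  left : C
  right : C
  u₁ : left ⟶ A₁
  u₂ : left ⟶ A₂
  u₁' : right ⟶ A₁'
  u₂' : right ⟶ A₂'
  φ : left ⟶ right
  commL : u₁ ≫ w₁ = u₂ ≫ w₂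
  memL : W (u₁ ≫ w₁)
  commR : u₁' ≫ w₁' = u₂' ≫ w₂'
  memR : W (u₁' ≫ w₁')
  commTop : u₁ ≫ f₁ = φ ≫ u₁'
  commBot : u₂ ≫ f₂ = φ ≫ u₂'

theorem statement15 (W : MorphismProperty C) (hW : FractionsCalculus W)
    {A₁ A₂ B A₁' A₂' B' : C}
    (w₁ : A₁ ⟶ B) (w₂ : A₂ ⟶ B) (w₁' : A₁' ⟶ B') (w₂' : A₂' ⟶ B')
    (hw₁ : W w₁) (hw₂ : W w₂) (hw₁' : W w₁') (hw₂' : W w₂')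
    (f₁ : A₁ ⟶ A₁') (f₂ : A₂ ⟶ A₂')
    (S : CellDiag W w₁ w₂ w₁' w₂' f₁ f₂)
    -- another representative `(v₁, D, v₂)` of the codomain vertical arrow
    {D : C} (v₁ : D ⟶ A₁') (v₂ : D ⟶ A₂')
    (hv : v₁ ≫ w₁' = v₂ ≫ w₂') (hvW : W (v₁ ≫ w₁'))
    (hrep : SpanEquivRaw W w₁' w₂' S.u₁' S.u₂' v₁ v₂) :
    ∃ (E : C) (r : E ⟶ S.left) (ψ : E ⟶ D),
      W ((r ≫ S.u₁) ≫ w₁) ∧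
      -- `(E, u₁ ∘ r, u₂ ∘ r, ψ, D, v₁, v₂)` is a double cell diagram
      (r ≫ S.u₁) ≫ f₁ = ψ ≫ v₁ ∧ (r ≫ S.u₂) ≫ f₂ = ψ ≫ v₂ ∧
      -- which represents the same double cell as `S`
      (∃ (E₀ E₀' : C) (a : E₀ ⟶ S.left) (b : E₀ ⟶ E)
          (a' : E₀' ⟶ S.right) (b' : E₀' ⟶ D) (χ : E₀ ⟶ E₀'),
        W (a ≫ S.u₁ ≫ w₁) ∧ W (a' ≫ S.u₁' ≫ w₁') ∧
        a ≫ S.u₁ = b ≫ (r ≫ S.u₁) ∧ a ≫ S.u₂ = b ≫ (r ≫ S.u₂) ∧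
        a' ≫ S.u₁' = b' ≫ v₁ ∧ a' ≫ S.u₂' = b' ≫ v₂ ∧
        a ≫ S.φ = χ ≫ a' ∧ b ≫ ψ = χ ≫ b') := by
  obtain ⟨F, ρ, s, h1, h2, hWρ⟩ := hrep
  obtain ⟨D', fbar, wbar, hWwbar, hore⟩ :=
    hW.ore (S.φ ≫ S.u₁' ≫ w₁') (ρ ≫ S.u₁' ≫ w₁') hWρ
  obtain ⟨Y, wt, hWwt, hcan⟩ :=
    hW.cancel (fbar ≫ ρ) (wbar ≫ S.φ) (S.u₁' ≫ w₁') S.memR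
      (by simpa using hore)
  have e1 : wt ≫ fbar ≫ ρ ≫ S.u₁' = wt ≫ wbar ≫ S.φ ≫ S.u₁' := by
    have : (wt ≫ fbar ≫ ρ) ≫ S.u₁' = (wt ≫ wbar ≫ S.φ) ≫ S.u₁' := by rw [hcan]
    simpa using this
  have e2 : wt ≫ fbar ≫ ρ ≫ S.u₂' = wt ≫ wbar ≫ S.φ ≫ S.u₂' := by
    have : (wt ≫ fbar ≫ ρ) ≫ S.u₂' = (wt ≫ wbar ≫ S.φ) ≫ S.u₂' := by rw [hcan]
    simpa using this
  have hWr : W ((wt ≫ wbar) ≫ S.u₁ ≫ w₁) := by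
    have := hW.comp (wt ≫ wbar) (S.u₁ ≫ w₁) (hW.comp wt wbar hWwt hWwbar) S.memL
    simpa using this
  refine ⟨Y, wt ≫ wbar, (wt ≫ fbar) ≫ s, by simpa using hWr, ?_, ?_,
    Y, F, wt ≫ wbar, 𝟙 Y, ρ, s, wt ≫ fbar, hWr, hWρ, by simp, by simp,
    h1, h2, ?_, by simp⟩
  · simp only [Category.assoc]
    rw [← h1, e1, S.commTop]
  · simp only [Category.assoc]
    rw [← h2, e2, S.commBot]
  · simp only [Category.assoc]
    have : (wt ≫ wbar) ≫ S.φ = (wt ≫ fbar) ≫ ρ := by simpa using hcan.symm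
    simpa using this
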